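/- Let k > 2 and let G_k(n, ℓ, j_1, j_2) denote the number of k-noncrossing partial matchings on {1,…,n} with exactly ℓ isolated vertices, exactly j_1 1-arcs and exactly j_2 2-arcs. Then for all b_1, b_2 ≥ 0, Σ_{j_1 ≥ b_1, j_2 ≥ b_2} C(j_1, b_1)·C(j_2, b_2)·G_k(n, ℓ, j_1, j_2) = λ(n, b_1, b_2) · f_k(n − 2(b_1 + b_2), ℓ), where λ(n, b_1, b_2) is the number of ways to select b_1 1-arcs and b_2 2-arcs over {1,…,n} that are pairwise vertex-disjoint, and C(·,·) is the binomial coefficient. -/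

import Mathlib

/-- A set of arcs (ordered pairs of vertices) is pairwise vertex-disjoint. -/
def ArcsDisjoint (M : Finset (ℕ × ℕ)) : Prop :=
  ∀ p ∈ M, ∀ q ∈ M, p ≠ q → p.1 ≠ q.1 ∧ p.1 ≠ q.2 ∧ p.2 ≠ q.1 ∧ p.2 ≠ q.2

/-- `M` is a partial matching on `{1,…,n}`: arcs `(i,j)` with `1 ≤ i < j ≤ n`,
every vertex in at most one arc. -/
def IsPartialMatching (n : ℕ) (M : Finset (ℕ × ℕ)) : Prop :=
  (∀ p ∈ M, 1 ≤ p.1 ∧ p.1 < p.2 ∧ p.2 ≤ n) ∧ ArcsDisjoint M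

/-- `M` contains `k` mutually crossing arcs
`(i₁,j₁),…,(i_k,j_k)` with `i₁ < ⋯ < i_k < j₁ < ⋯ < j_k`. -/
def HasKCrossing (k : ℕ) (M : Finset (ℕ × ℕ)) : Prop :=
  ∃ f : Fin k → ℕ × ℕ, (∀ r, f r ∈ M) ∧
    (StrictMono fun r => (f r).1) ∧ (StrictMono fun r => (f r).2) ∧
    ∀ r s : Fin k, (f r).1 < (f s).2

/-- `M` is `k`-noncrossing. -/
def KNoncrossing (k : ℕ) (M : Finset (ℕ × ℕ)) : Prop := ¬ HasKCrossing k M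

/-- The number of isolated vertices of `M` in `{1,…,n}`. -/
def isolatedCount (n : ℕ) (M : Finset (ℕ × ℕ)) : ℕ :=
  ((Finset.Icc 1 n).filter fun v => ∀ p ∈ M, p.1 ≠ v ∧ p.2 ≠ v).card

/-- `fMatch k n ℓ`: the number of `k`-noncrossing partial matchings on `{1,…,n}`
with exactly `ℓ` isolated vertices. -/
noncomputable def fMatch (k n ℓ : ℕ) : ℕ :=
  Nat.card {M : Finset (ℕ × ℕ) //
    IsPartialMatching n M ∧ KNoncrossing k M ∧ isolatedCount n M = ℓ}

/-- `p` is a 1-arc over `{1,…,n}`, i.e. `p = (i, i+1)` with `1 ≤ i ≤ n-1`. -/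
def IsOneArc (n : ℕ) (p : ℕ × ℕ) : Prop :=
  1 ≤ p.1 ∧ p.1 + 1 ≤ n ∧ p.2 = p.1 + 1

/-- `p` is a 2-arc over `{1,…,n}`, i.e. `p = (i, i+2)` with `1 ≤ i ≤ n-2`. -/
def IsTwoArc (n : ℕ) (p : ℕ × ℕ) : Prop :=
  1 ≤ p.1 ∧ p.1 + 2 ≤ n ∧ p.2 = p.1 + 2

/-- `λ(n, b₁, b₂)`: the number of ways to select `b₁` 1-arcs and `b₂` 2-arcs
over `{1,…,n}` such that all selected arcs are pairwise vertex-disjoint. -/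
noncomputable def lamSel (n b₁ b₂ : ℕ) : ℕ :=
  Nat.card {A : Finset (ℕ × ℕ) //
    (∀ p ∈ A, IsOneArc n p ∨ IsTwoArc n p) ∧ ArcsDisjoint A ∧
    (A.filter fun p => p.2 = p.1 + 1).card = b₁ ∧
    (A.filter fun p => p.2 = p.1 + 2).card = b₂}

/-- `G_k(n,ℓ,j₁,j₂)`: the number of `k`-noncrossing partial matchings on
`{1,…,n}` with exactly `ℓ` isolated vertices, exactly `j₁` 1-arcs and exactly
`j₂` 2-arcs. -/
noncomputable def GCount₂ (k n ℓ j₁ j₂ : ℕ) : ℕ :=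
  Nat.card {M : Finset (ℕ × ℕ) //
    IsPartialMatching n M ∧ KNoncrossing k M ∧ isolatedCount n M = ℓ ∧
    (M.filter fun p => p.2 = p.1 + 1).card = j₁ ∧
    (M.filter fun p => p.2 = p.1 + 2).card = j₂}


namespace S19
open Finset

/-! ### Order machinery -/

noncomputable def down (C : Finset ℕ) (v : ℕ) : ℕ :=
  if h : v ∈ C then (((C.orderIsoOfFin rfl).symm ⟨v, h⟩ : Fin C.card) : ℕ) + 1 else 0

noncomputable def up (C : Finset ℕ) (w : ℕ) : ℕ :=
  if h : w - 1 < C.card then ((C.orderIsoOfFin rfl ⟨w - 1, h⟩ : {x // x ∈ C}) : ℕ) else 0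

lemma up_mem {C : Finset ℕ} {w : ℕ} (h1 : 1 ≤ w) (h2 : w ≤ C.card) : up C w ∈ C := by
  rw [up, dif_pos (by omega)]
  exact (C.orderIsoOfFin rfl ⟨w - 1, by omega⟩).2

lemma down_mem {C : Finset ℕ} {v : ℕ} (h : v ∈ C) :
    1 ≤ down C v ∧ down C v ≤ C.card := by
  rw [down, dif_pos h]
  have := ((C.orderIsoOfFin rfl).symm ⟨v, h⟩).2
  omega

lemma up_down {C : Finset ℕ} {v : ℕ} (h : v ∈ C) : up C (down C v) = v := by
  rw [down, dif_pos h, up, dif_pos]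
  · simp
  · have := ((C.orderIsoOfFin rfl).symm ⟨v, h⟩).2
    omega

lemma down_up {C : Finset ℕ} {w : ℕ} (h1 : 1 ≤ w) (h2 : w ≤ C.card) :
    down C (up C w) = w := by
  have hm := up_mem h1 h2
  rw [up, dif_pos (by omega)] at hm ⊢
  rw [down, dif_pos hm]
  have : (⟨_, hm⟩ : {x // x ∈ C}) = C.orderIsoOfFin rfl ⟨w - 1, by omega⟩ := rfl
  rw [this, OrderIso.symm_apply_apply]
  show w - 1 + 1 = w
  omega

lemma up_lt_up {C : Finset ℕ} {w₁ w₂ : ℕ} (h1 : 1 ≤ w₁) (h2 : w₂ ≤ C.card)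
    (h : w₁ < w₂) : up C w₁ < up C w₂ := by
  rw [up, up, dif_pos (by omega), dif_pos (by omega)]
  have := (C.orderIsoOfFin rfl).strictMono (a := ⟨w₁ - 1, by omega⟩)
    (b := ⟨w₂ - 1, by omega⟩) (by simp [Fin.lt_def]; omega)
  exact this

lemma down_lt_down {C : Finset ℕ} {v₁ v₂ : ℕ} (h1 : v₁ ∈ C) (h2 : v₂ ∈ C)
    (h : v₁ < v₂) : down C v₁ < down C v₂ := by
  simp only [down, dif_pos h1, dif_pos h2]
  have := (C.orderIsoOfFin rfl).symm.strictMono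
    (a := ⟨v₁, h1⟩) (b := ⟨v₂, h2⟩) (by exact h)
  simp only [Fin.lt_def] at this
  omega

lemma down_inj {C : Finset ℕ} {v₁ v₂ : ℕ} (h1 : v₁ ∈ C) (h2 : v₂ ∈ C)
    (h : down C v₁ = down C v₂) : v₁ = v₂ :=
  (up_down h1).symm.trans (by rw [h, up_down h2])

lemma up_inj {C : Finset ℕ} {w₁ w₂ : ℕ} (h1 : 1 ≤ w₁) (h2 : w₁ ≤ C.card)
    (h3 : 1 ≤ w₂) (h4 : w₂ ≤ C.card) (h : up C w₁ = up C w₂) : w₁ = w₂ := by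
  have e1 := down_up h1 h2
  have e2 := down_up h3 h4
  rw [← e1, ← e2, h]

/-! ### verts and crossing lemmas -/

def verts (A : Finset (ℕ × ℕ)) : Finset ℕ := A.biUnion fun p => {p.1, p.2}

lemma mem_verts {A : Finset (ℕ × ℕ)} {v : ℕ} :
    v ∈ verts A ↔ ∃ p ∈ A, v = p.1 ∨ v = p.2 := by
  simp [verts]

lemma card_verts {A : Finset (ℕ × ℕ)} (hd : ArcsDisjoint A)
    (hlt : ∀ p ∈ A, p.1 < p.2) : (verts A).card = 2 * A.card := by
  classical
  rw [verts, card_biUnion]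
  · rw [Finset.sum_congr rfl (g := fun _ => 2), Finset.sum_const, smul_eq_mul, mul_comm]
    intro p hp
    rw [card_insert_of_notMem (by simp; exact (hlt p hp).ne), card_singleton]
  · intro p hp q hq hpq
    obtain ⟨h1, h2, h3, h4⟩ := hd p hp q hq hpq
    simp [Finset.disjoint_left]
    exact ⟨⟨h1, h2⟩, h3, h4⟩

lemma crossing_span {k : ℕ} (hk : 3 ≤ k) {f : Fin k → ℕ × ℕ}
    (hm1 : StrictMono fun r => (f r).1) (hm2 : StrictMono fun r => (f r).2)
    (hcr : ∀ r s : Fin k, (f r).1 < (f s).2) (r : Fin k) :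
    (f r).1 + 2 < (f r).2 := by
  classical
  set g : Fin k → ℕ := fun u => if u < r then (f u).2 else (f u).1 with hg
  have hbet : ∀ u : Fin k, u ≠ r → (f r).1 < g u ∧ g u < (f r).2 := by
    intro u hu
    by_cases h : u < r
    · simp only [hg, if_pos h]
      exact ⟨hcr r u, hm2 h⟩
    · have h' : r < u := lt_of_le_of_ne (not_lt.mp h) (Ne.symm hu)
      simp only [hg, if_neg h]
      exact ⟨hm1 h', hcr u r⟩
  have hinj : ∀ u v : Fin k, u ≠ r → v ≠ r → u < v → g u ≠ g v := by
    intro u v hu hv huv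
    by_cases h1 : u < r <;> by_cases h2 : v < r
    · simp only [hg, if_pos h1, if_pos h2]; exact (hm2 huv).ne
    · simp only [hg, if_pos h1, if_neg h2]
      exact (hcr v u).ne'
    · exact absurd (huv.trans h2) h1
    · simp only [hg, if_neg h1, if_neg h2]; exact (hm1 huv).ne
  obtain ⟨u, v, hu, hv, huv⟩ : ∃ u v : Fin k, u ≠ r ∧ v ≠ r ∧ u < v := by
    have h0 : (0 : ℕ) < k := by omega
    have h1 : (1 : ℕ) < k := by omega
    have h2 : (2 : ℕ) < k := by omega
    by_cases hr0 : r = ⟨0, h0⟩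
    · exact ⟨⟨1, h1⟩, ⟨2, h2⟩, by simp [hr0, Fin.ext_iff], by simp [hr0, Fin.ext_iff],
        by simp [Fin.lt_def]⟩
    · by_cases hr1 : r = ⟨1, h1⟩
      · exact ⟨⟨0, h0⟩, ⟨2, h2⟩, by simp [hr1, Fin.ext_iff], by simp [hr1, Fin.ext_iff],
          by simp [Fin.lt_def]⟩
      · exact ⟨⟨0, h0⟩, ⟨1, h1⟩, by simpa [Fin.ext_iff] using Ne.symm hr0 ∘ Fin.ext,
          by simpa [Fin.ext_iff] using Ne.symm hr1 ∘ Fin.ext, by simp [Fin.lt_def]⟩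
  have b1 := hbet u hu
  have b2 := hbet v hv
  have hne := hinj u v hu hv huv
  omega

lemma hasKCrossing_union_right {k : ℕ} (hk : 3 ≤ k) {A B : Finset (ℕ × ℕ)}
    (hA : ∀ p ∈ A, p.2 ≤ p.1 + 2) (h : HasKCrossing k (A ∪ B)) :
    HasKCrossing k B := by
  obtain ⟨f, hmem, hm1, hm2, hcr⟩ := h
  refine ⟨f, fun r => ?_, hm1, hm2, hcr⟩
  have hspan := crossing_span hk hm1 hm2 hcr r
  rcases Finset.mem_union.mp (hmem r) with h | h
  · exact absurd (hA _ h) (by omega)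
  · exact h

lemma hasKCrossing_map {k : ℕ} {M M' : Finset (ℕ × ℕ)} {g : ℕ → ℕ} {S : Finset ℕ}
    (hS : ∀ p ∈ M, p.1 ∈ S ∧ p.2 ∈ S)
    (hg : ∀ a ∈ S, ∀ b ∈ S, a < b → g a < g b)
    (hM' : ∀ p ∈ M, (g p.1, g p.2) ∈ M')
    (h : HasKCrossing k M) : HasKCrossing k M' := by
  obtain ⟨f, hmem, hm1, hm2, hcr⟩ := h
  refine ⟨fun r => (g (f r).1, g (f r).2), fun r => hM' _ (hmem r), ?_, ?_, ?_⟩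
  · intro r s hrs
    exact hg _ (hS _ (hmem r)).1 _ (hS _ (hmem s)).1 (hm1 hrs)
  · intro r s hrs
    exact hg _ (hS _ (hmem r)).2 _ (hS _ (hmem s)).2 (hm2 hrs)
  · intro r s
    exact hg _ (hS _ (hmem r)).1 _ (hS _ (hmem s)).2 (hcr r s)

/-! ### Selections, contraction and expansion -/

structure Sel (n b₁ b₂ : ℕ) (A : Finset (ℕ × ℕ)) : Prop where
  arcs : ∀ p ∈ A, IsOneArc n p ∨ IsTwoArc n p
  disj : ArcsDisjoint A
  c1 : (A.filter fun p => p.2 = p.1 + 1).card = b₁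
  c2 : (A.filter fun p => p.2 = p.1 + 2).card = b₂

variable {k n b₁ b₂ : ℕ} {A N M S₁ S₂ : Finset (ℕ × ℕ)}

lemma Sel.arc_bounds (hA : Sel n b₁ b₂ A) :
    ∀ p ∈ A, 1 ≤ p.1 ∧ p.1 < p.2 ∧ p.2 ≤ n ∧ p.2 ≤ p.1 + 2 := by
  intro p hp
  rcases hA.arcs p hp with ⟨h1, h2, h3⟩ | ⟨h1, h2, h3⟩ <;>
    exact ⟨by omega, by omega, by omega, by omega⟩

lemma Sel.card_eq (hA : Sel n b₁ b₂ A) : A.card = b₁ + b₂ := by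
  classical
  have hfe : A.filter (fun p => ¬ p.2 = p.1 + 1) = A.filter (fun p => p.2 = p.1 + 2) := by
    apply filter_congr
    intro p hp
    rcases hA.arcs p hp with ⟨h1, h2, h3⟩ | ⟨h1, h2, h3⟩ <;> rw [h3] <;>
      simp <;> omega
  rw [← hA.c1, ← hA.c2, ← hfe, card_filter_add_card_filter_not]

lemma Sel.verts_subset (hA : Sel n b₁ b₂ A) : verts A ⊆ Icc 1 n := by
  intro v hv
  obtain ⟨p, hp, hv⟩ := mem_verts.mp hv
  have := hA.arc_bounds p hp
  rw [mem_Icc]; omega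

lemma Sel.Ccard (hA : Sel n b₁ b₂ A) :
    (Icc 1 n \ verts A).card = n - 2 * (b₁ + b₂) ∧ 2 * (b₁ + b₂) ≤ n := by
  have hv : (verts A).card = 2 * A.card :=
    card_verts hA.disj (fun p hp => (hA.arc_bounds p hp).2.1)
  have hle : (verts A).card ≤ (Icc 1 n).card := card_le_card hA.verts_subset
  have hIcc : (Icc 1 n).card = n := by rw [Nat.card_Icc]; omega
  have hsd := card_sdiff_of_subset hA.verts_subset
  have hcA := hA.card_eq
  constructor <;> omega

noncomputable def ctr (n : ℕ) (A M : Finset (ℕ × ℕ)) : Finset (ℕ × ℕ) :=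
  (M \ A).image fun p => (down (Icc 1 n \ verts A) p.1, down (Icc 1 n \ verts A) p.2)

noncomputable def expd (n : ℕ) (A N : Finset (ℕ × ℕ)) : Finset (ℕ × ℕ) :=
  A ∪ N.image fun p => (up (Icc 1 n \ verts A) p.1, up (Icc 1 n \ verts A) p.2)

lemma matching_verts_subset (hM : IsPartialMatching n M) : verts M ⊆ Icc 1 n := by
  intro v hv
  obtain ⟨p, hp, hv⟩ := mem_verts.mp hv
  have := hM.1 p hp
  rw [mem_Icc]; omega

lemma matching_card_le (hM : IsPartialMatching n M) : 2 * M.card ≤ n := by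
  have hv : (verts M).card = 2 * M.card := card_verts hM.2 (fun p hp => (hM.1 p hp).2.1)
  have hle : (verts M).card ≤ (Icc 1 n).card := card_le_card (matching_verts_subset hM)
  have hIcc : (Icc 1 n).card = n := by rw [Nat.card_Icc]; omega
  omega

lemma matching_mem_prod (hM : IsPartialMatching n M) : M ⊆ Icc 1 n ×ˢ Icc 1 n := by
  intro p hp
  have := hM.1 p hp
  rw [mem_product, mem_Icc, mem_Icc]
  omega

lemma diff_endpoints (hM : IsPartialMatching n M) (hAM : A ⊆ M) :
    ∀ p ∈ M \ A, p.1 ∈ Icc 1 n \ verts A ∧ p.2 ∈ Icc 1 n \ verts A := by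
  intro p hp
  obtain ⟨hpM, hpA⟩ := mem_sdiff.mp hp
  have hb := hM.1 p hpM
  have key : ∀ x, (x = p.1 ∨ x = p.2) → x ∉ verts A := by
    intro x hx hxv
    obtain ⟨q, hq, hor⟩ := mem_verts.mp hxv
    have hne : p ≠ q := by rintro rfl; exact hpA hq
    have := hM.2 p hpM q (hAM hq) hne
    omega
  exact ⟨mem_sdiff.mpr ⟨mem_Icc.mpr ⟨hb.1, by omega⟩, key _ (Or.inl rfl)⟩,
         mem_sdiff.mpr ⟨mem_Icc.mpr ⟨by omega, hb.2.2⟩, key _ (Or.inr rfl)⟩⟩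

lemma expd_matching (hA : Sel n b₁ b₂ A)
    (hN : IsPartialMatching (n - 2 * (b₁ + b₂)) N) :
    IsPartialMatching n (expd n A N) := by
  classical
  have hC : (Icc 1 n \ verts A).card = n - 2 * (b₁ + b₂) := hA.Ccard.1
  constructor
  · intro p hp
    rcases mem_union.mp hp with h | h
    · have := hA.arc_bounds p h
      exact ⟨this.1, this.2.1, this.2.2.1⟩
    · obtain ⟨q, hq, rfl⟩ := mem_image.mp h
      obtain ⟨o1, o2, o3⟩ := hN.1 q hq
      have m1 : up (Icc 1 n \ verts A) q.1 ∈ (Icc 1 n \ verts A) := up_mem o1 (by omega)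
      have m2 : up (Icc 1 n \ verts A) q.2 ∈ (Icc 1 n \ verts A) := up_mem (by omega) (by omega)
      have e1 := mem_Icc.mp (mem_sdiff.mp m1).1
      have e2 := mem_Icc.mp (mem_sdiff.mp m2).1
      exact ⟨e1.1, up_lt_up o1 (by omega) o2, e2.2⟩
  · intro p hp q hq hpq
    rcases mem_union.mp hp with h1 | h1 <;> rcases mem_union.mp hq with h2 | h2
    · exact hA.disj p h1 q h2 hpq
    · obtain ⟨b, hb, rfl⟩ := mem_image.mp h2
      obtain ⟨o1, o2, o3⟩ := hN.1 b hb
      have m1 : up (Icc 1 n \ verts A) b.1 ∈ (Icc 1 n \ verts A) := up_mem o1 (by omega)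
      have m2 : up (Icc 1 n \ verts A) b.2 ∈ (Icc 1 n \ verts A) := up_mem (by omega) (by omega)
      have v1 : p.1 ∈ verts A := mem_verts.mpr ⟨p, h1, Or.inl rfl⟩
      have v2 : p.2 ∈ verts A := mem_verts.mpr ⟨p, h1, Or.inr rfl⟩
      refine ⟨fun h => ?_, fun h => ?_, fun h => ?_, fun h => ?_⟩ <;> dsimp only at h
      · exact (mem_sdiff.mp m1).2 (h ▸ v1)
      · exact (mem_sdiff.mp m2).2 (h ▸ v1)
      · exact (mem_sdiff.mp m1).2 (h ▸ v2)
      · exact (mem_sdiff.mp m2).2 (h ▸ v2)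
    · obtain ⟨b, hb, rfl⟩ := mem_image.mp h1
      obtain ⟨o1, o2, o3⟩ := hN.1 b hb
      have m1 : up (Icc 1 n \ verts A) b.1 ∈ (Icc 1 n \ verts A) := up_mem o1 (by omega)
      have m2 : up (Icc 1 n \ verts A) b.2 ∈ (Icc 1 n \ verts A) := up_mem (by omega) (by omega)
      have v1 : q.1 ∈ verts A := mem_verts.mpr ⟨q, h2, Or.inl rfl⟩
      have v2 : q.2 ∈ verts A := mem_verts.mpr ⟨q, h2, Or.inr rfl⟩
      refine ⟨fun h => ?_, fun h => ?_, fun h => ?_, fun h => ?_⟩ <;> dsimp only at h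
      · exact (mem_sdiff.mp m1).2 (h.symm ▸ v1)
      · exact (mem_sdiff.mp m1).2 (h.symm ▸ v2)
      · exact (mem_sdiff.mp m2).2 (h.symm ▸ v1)
      · exact (mem_sdiff.mp m2).2 (h.symm ▸ v2)
    · obtain ⟨a, ha, rfl⟩ := mem_image.mp h1
      obtain ⟨b, hb, rfl⟩ := mem_image.mp h2
      have hab : a ≠ b := by rintro rfl; exact hpq rfl
      have oa := hN.1 a ha
      have ob := hN.1 b hb
      obtain ⟨oa1, oa2, oa3⟩ := oa
      obtain ⟨ob1, ob2, ob3⟩ := ob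
      have hd := hN.2 a ha b hb hab
      refine ⟨fun h => ?_, fun h => ?_, fun h => ?_, fun h => ?_⟩ <;> dsimp only at h
      · exact hd.1 (up_inj oa1 (by omega) ob1 (by omega) h)
      · exact hd.2.1 (up_inj oa1 (by omega) (by omega) (by omega) h)
      · exact hd.2.2.1 (up_inj (by omega) (by omega) ob1 (by omega) h)
      · exact hd.2.2.2 (up_inj (by omega) (by omega) (by omega) (by omega) h)

lemma expd_iso (hA : Sel n b₁ b₂ A)
    (hN : IsPartialMatching (n - 2 * (b₁ + b₂)) N) :
    isolatedCount n (expd n A N) = isolatedCount (n - 2 * (b₁ + b₂)) N := by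
  classical
  have hC : (Icc 1 n \ verts A).card = n - 2 * (b₁ + b₂) := hA.Ccard.1
  rw [isolatedCount, isolatedCount]
  have himg : (Icc 1 n).filter (fun v => ∀ p ∈ expd n A N, p.1 ≠ v ∧ p.2 ≠ v)
      = ((Icc 1 (n - 2 * (b₁ + b₂))).filter fun w => ∀ q ∈ N, q.1 ≠ w ∧ q.2 ≠ w).image (up (Icc 1 n \ verts A)) := by
    ext v
    simp only [mem_image, mem_filter, mem_Icc]
    constructor
    · rintro ⟨hv, hiso⟩
      have hvC : v ∈ (Icc 1 n \ verts A) := by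
        rw [mem_sdiff]
        refine ⟨mem_Icc.mpr hv, ?_⟩
        intro hvv
        obtain ⟨p, hp, hor⟩ := mem_verts.mp hvv
        have := hiso p (mem_union_left _ hp)
        omega
      have hd := down_mem hvC
      refine ⟨down (Icc 1 n \ verts A) v, ⟨⟨hd.1, by omega⟩, ?_⟩, up_down hvC⟩
      intro q hq
      have hmem : ((up (Icc 1 n \ verts A) q.1, up (Icc 1 n \ verts A) q.2) : ℕ × ℕ) ∈ expd n A N :=
        mem_union_right _ (mem_image_of_mem _ hq)
      constructor
      · intro hq1
        exact (hiso _ hmem).1 (by rw [hq1, up_down hvC])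
      · intro hq2
        exact (hiso _ hmem).2 (by rw [hq2, up_down hvC])
    · rintro ⟨w, ⟨⟨hw1, hw2⟩, hiso⟩, rfl⟩
      have hwC : up (Icc 1 n \ verts A) w ∈ (Icc 1 n \ verts A) := up_mem hw1 (by omega)
      obtain ⟨hIcc, hnv⟩ := mem_sdiff.mp hwC
      refine ⟨mem_Icc.mp hIcc, ?_⟩
      intro p hp
      rcases mem_union.mp hp with h | h
      · exact ⟨fun e => hnv (e ▸ mem_verts.mpr ⟨p, h, Or.inl rfl⟩),
               fun e => hnv (e ▸ mem_verts.mpr ⟨p, h, Or.inr rfl⟩)⟩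
      · obtain ⟨a, ha, rfl⟩ := mem_image.mp h
        obtain ⟨o1, o2, o3⟩ := hN.1 a ha
        have := hiso a ha
        exact ⟨fun e => this.1 (up_inj o1 (by omega) hw1 (by omega) e),
               fun e => this.2 (up_inj (by omega) (by omega) hw1 (by omega) e)⟩
  rw [himg, card_image_of_injOn]
  intro x hx y hy e
  simp only [coe_filter, Set.mem_setOf_eq, mem_Icc] at hx hy
  exact up_inj hx.1.1 (by omega) hy.1.1 (by omega) e

lemma expd_cross (hk : 3 ≤ k) (hA : Sel n b₁ b₂ A)
    (hN : IsPartialMatching (n - 2 * (b₁ + b₂)) N) :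
    HasKCrossing k (expd n A N) ↔ HasKCrossing k N := by
  classical
  have hC : (Icc 1 n \ verts A).card = n - 2 * (b₁ + b₂) := hA.Ccard.1
  constructor
  · intro h
    have h2 : HasKCrossing k (N.image fun p => (up (Icc 1 n \ verts A) p.1, up (Icc 1 n \ verts A) p.2)) := by
      refine hasKCrossing_union_right hk (fun p hp => (hA.arc_bounds p hp).2.2.2) ?_
      rw [expd] at h
      exact h
    refine hasKCrossing_map (g := down (Icc 1 n \ verts A)) (S := (Icc 1 n \ verts A)) ?_ ?_ ?_ h2
    · rintro p hp
      obtain ⟨a, ha, rfl⟩ := mem_image.mp hp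
      obtain ⟨o1, o2, o3⟩ := hN.1 a ha
      exact ⟨up_mem o1 (by omega), up_mem (by omega) (by omega)⟩
    · exact fun a ha b hb => down_lt_down ha hb
    · rintro p hp
      obtain ⟨a, ha, rfl⟩ := mem_image.mp hp
      obtain ⟨o1, o2, o3⟩ := hN.1 a ha
      have e1 : down (Icc 1 n \ verts A) (up (Icc 1 n \ verts A) a.1) = a.1 := down_up o1 (by omega)
      have e2 : down (Icc 1 n \ verts A) (up (Icc 1 n \ verts A) a.2) = a.2 := down_up (by omega) (by omega)
      simpa [e1, e2] using ha
  · intro h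
    refine hasKCrossing_map (g := up (Icc 1 n \ verts A)) (S := Icc 1 (n - 2 * (b₁ + b₂))) ?_ ?_ ?_ h
    · intro q hq
      obtain ⟨o1, o2, o3⟩ := hN.1 q hq
      exact ⟨mem_Icc.mpr ⟨by omega, by omega⟩, mem_Icc.mpr ⟨by omega, by omega⟩⟩
    · intro a ha b hb hab
      rw [mem_Icc] at ha hb
      exact up_lt_up ha.1 (by omega) hab
    · intro q hq
      exact mem_union_right _ (mem_image_of_mem _ hq)

lemma ctr_expd (hA : Sel n b₁ b₂ A)
    (hN : IsPartialMatching (n - 2 * (b₁ + b₂)) N) :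
    ctr n A (expd n A N) = N := by
  classical
  simp only [ctr, expd]
  have hC : (Icc 1 n \ verts A).card = n - 2 * (b₁ + b₂) := hA.Ccard.1
  have hdisj : ∀ p ∈ N.image (fun p => (up (Icc 1 n \ verts A) p.1, up (Icc 1 n \ verts A) p.2)), p ∉ A := by
    rintro p hp hpA
    obtain ⟨a, ha, rfl⟩ := mem_image.mp hp
    obtain ⟨o1, o2, o3⟩ := hN.1 a ha
    have : up (Icc 1 n \ verts A) a.1 ∈ (Icc 1 n \ verts A) := up_mem o1 (by omega)
    exact (mem_sdiff.mp this).2 (mem_verts.mpr ⟨_, hpA, Or.inl rfl⟩)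
  have h1 : (A ∪ N.image fun p => (up (Icc 1 n \ verts A) p.1, up (Icc 1 n \ verts A) p.2)) \ A
      = N.image fun p => (up (Icc 1 n \ verts A) p.1, up (Icc 1 n \ verts A) p.2) := by
    ext p
    simp only [mem_sdiff, mem_union]
    constructor
    · rintro ⟨h | h, hpA⟩
      · exact absurd h hpA
      · exact h
    · intro h
      exact ⟨Or.inr h, hdisj p h⟩
  rw [h1, image_image]
  have heq : ∀ a ∈ N, ((fun p : ℕ × ℕ => (down (Icc 1 n \ verts A) p.1, down (Icc 1 n \ verts A) p.2)) ∘
      fun p : ℕ × ℕ => (up (Icc 1 n \ verts A) p.1, up (Icc 1 n \ verts A) p.2)) a = id a := by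
    intro a ha
    obtain ⟨o1, o2, o3⟩ := hN.1 a ha
    simp only [Function.comp_apply, id_eq]
    rw [down_up o1 (by omega), down_up (by omega) (by omega)]
  rw [image_congr heq, image_id]

lemma expd_ctr (hA : Sel n b₁ b₂ A) (hM : IsPartialMatching n M) (hAM : A ⊆ M) :
    expd n A (ctr n A M) = M := by
  classical
  simp only [ctr, expd, image_image]
  have hend := diff_endpoints hM hAM
  have heq : ∀ p ∈ M \ A, ((fun p : ℕ × ℕ => (up (Icc 1 n \ verts A) p.1, up (Icc 1 n \ verts A) p.2)) ∘
      fun p : ℕ × ℕ => (down (Icc 1 n \ verts A) p.1, down (Icc 1 n \ verts A) p.2)) p = id p := by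
    intro p hp
    obtain ⟨e1, e2⟩ := hend p hp
    simp only [Function.comp_apply, id_eq]
    rw [up_down e1, up_down e2]
  rw [image_congr heq, image_id, union_sdiff_of_subset hAM]

lemma ctr_matching (hA : Sel n b₁ b₂ A) (hM : IsPartialMatching n M) (hAM : A ⊆ M) :
    IsPartialMatching (n - 2 * (b₁ + b₂)) (ctr n A M) := by
  classical
  have hC : (Icc 1 n \ verts A).card = n - 2 * (b₁ + b₂) := hA.Ccard.1
  have hend := diff_endpoints hM hAM
  constructor
  · intro p hp
    obtain ⟨q, hq, rfl⟩ := mem_image.mp hp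
    obtain ⟨e1, e2⟩ := hend q hq
    have hq' := hM.1 q (mem_sdiff.mp hq).1
    have d1 := down_mem e1
    have d2 := down_mem e2
    exact ⟨d1.1, down_lt_down e1 e2 hq'.2.1, by omega⟩
  · intro p hp q hq hpq
    obtain ⟨a, ha, rfl⟩ := mem_image.mp hp
    obtain ⟨b, hb, rfl⟩ := mem_image.mp hq
    have hab : a ≠ b := by rintro rfl; exact hpq rfl
    have hd := hM.2 a (mem_sdiff.mp ha).1 b (mem_sdiff.mp hb).1 hab
    obtain ⟨a1, a2⟩ := hend a ha
    obtain ⟨b1, b2⟩ := hend b hb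
    exact ⟨fun h => hd.1 (down_inj a1 b1 h), fun h => hd.2.1 (down_inj a1 b2 h),
           fun h => hd.2.2.1 (down_inj a2 b1 h), fun h => hd.2.2.2 (down_inj a2 b2 h)⟩

lemma triple_sel (hM : IsPartialMatching n M)
    (hS₁ : S₁ ⊆ M.filter fun p => p.2 = p.1 + 1) (hc₁ : S₁.card = b₁)
    (hS₂ : S₂ ⊆ M.filter fun p => p.2 = p.1 + 2) (hc₂ : S₂.card = b₂) :
    Sel n b₁ b₂ (S₁ ∪ S₂) ∧ S₁ ∪ S₂ ⊆ M ∧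
    ((S₁ ∪ S₂).filter fun p => p.2 = p.1 + 1) = S₁ ∧
    ((S₁ ∪ S₂).filter fun p => p.2 = p.1 + 2) = S₂ := by
  classical
  have h1 : ∀ p ∈ S₁, p ∈ M ∧ p.2 = p.1 + 1 := fun p hp => mem_filter.mp (hS₁ hp)
  have h2 : ∀ p ∈ S₂, p ∈ M ∧ p.2 = p.1 + 2 := fun p hp => mem_filter.mp (hS₂ hp)
  have hsub : S₁ ∪ S₂ ⊆ M := union_subset (fun p hp => (h1 p hp).1) (fun p hp => (h2 p hp).1)
  have hf1 : ((S₁ ∪ S₂).filter fun p => p.2 = p.1 + 1) = S₁ := by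
    ext p
    simp only [mem_filter, mem_union]
    constructor
    · rintro ⟨h | h, he⟩
      · exact h
      · have := (h2 p h).2; omega
    · intro h
      exact ⟨Or.inl h, (h1 p h).2⟩
  have hf2 : ((S₁ ∪ S₂).filter fun p => p.2 = p.1 + 2) = S₂ := by
    ext p
    simp only [mem_filter, mem_union]
    constructor
    · rintro ⟨h | h, he⟩
      · have := (h1 p h).2; omega
      · exact h
    · intro h
      exact ⟨Or.inr h, (h2 p h).2⟩
  refine ⟨⟨?_, ?_, ?_, ?_⟩, hsub, hf1, hf2⟩
  · intro p hp
    have hb := hM.1 p (hsub hp)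
    rcases mem_union.mp hp with h | h
    · exact Or.inl ⟨hb.1, by have := (h1 p h).2; omega, (h1 p h).2⟩
    · exact Or.inr ⟨hb.1, by have := (h2 p h).2; omega, (h2 p h).2⟩
  · exact fun p hp q hq hpq => hM.2 p (hsub hp) q (hsub hq) hpq
  · rw [hf1, hc₁]
  · rw [hf2, hc₂]

/-! ### Counting -/

lemma natCard_subtype {α : Type*} (Ω : Finset α) (P : α → Prop) [DecidablePred P]
    (hP : ∀ x, P x → x ∈ Ω) : Nat.card {x // P x} = (Ω.filter P).card := by
  have h1 : {x | P x} = ↑(Ω.filter P) := by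
    ext x
    simp only [Set.mem_setOf_eq, coe_filter, Set.mem_setOf_eq]
    exact ⟨fun h => ⟨hP x h, h⟩, fun h => h.2⟩
  calc Nat.card {x // P x} = ({x | P x} : Set α).ncard := (Nat.card_coe_set_eq _).symm
    _ = _ := by rw [h1, Set.ncard_coe_finset]

def P0 (k n ℓ : ℕ) (M : Finset (ℕ × ℕ)) : Prop :=
  IsPartialMatching n M ∧ KNoncrossing k M ∧ isolatedCount n M = ℓ

noncomputable def Mset (k n ℓ : ℕ) : Finset (Finset (ℕ × ℕ)) :=
  @Finset.filter _ (P0 k n ℓ) (Classical.decPred _) (Icc 1 n ×ˢ Icc 1 n).powerset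

def PA (n b₁ b₂ : ℕ) (A : Finset (ℕ × ℕ)) : Prop :=
  (∀ p ∈ A, IsOneArc n p ∨ IsTwoArc n p) ∧ ArcsDisjoint A ∧
    (A.filter fun p => p.2 = p.1 + 1).card = b₁ ∧
    (A.filter fun p => p.2 = p.1 + 2).card = b₂

noncomputable def Aset (n b₁ b₂ : ℕ) : Finset (Finset (ℕ × ℕ)) :=
  @Finset.filter _ (PA n b₁ b₂) (Classical.decPred _) (Icc 1 n ×ˢ Icc 1 n).powerset

lemma PA_sel {n b₁ b₂ : ℕ} {A : Finset (ℕ × ℕ)} (h : PA n b₁ b₂ A) : Sel n b₁ b₂ A :=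
  ⟨h.1, h.2.1, h.2.2.1, h.2.2.2⟩

lemma mem_Mset {k n ℓ : ℕ} {M : Finset (ℕ × ℕ)} :
    M ∈ Mset k n ℓ ↔ P0 k n ℓ M := by
  classical
  simp only [Mset, mem_filter, mem_powerset]
  exact ⟨fun h => h.2, fun h => ⟨matching_mem_prod h.1, h⟩⟩

lemma mem_Aset {n b₁ b₂ : ℕ} {A : Finset (ℕ × ℕ)} :
    A ∈ Aset n b₁ b₂ ↔ PA n b₁ b₂ A := by
  classical
  simp only [Aset, mem_filter, mem_powerset]
  refine ⟨fun h => h.2, fun h => ⟨?_, h⟩⟩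
  intro p hp
  have := (PA_sel h).arc_bounds p hp
  rw [mem_product, mem_Icc, mem_Icc]
  omega

lemma fMatch_eq (k n ℓ : ℕ) : fMatch k n ℓ = (Mset k n ℓ).card := by
  classical
  have h1 : fMatch k n ℓ = ((Icc 1 n ×ˢ Icc 1 n).powerset.filter fun M =>
      IsPartialMatching n M ∧ KNoncrossing k M ∧ isolatedCount n M = ℓ).card :=
    natCard_subtype _ _ (fun M h => mem_powerset.mpr (matching_mem_prod h.1))
  rw [h1, Mset]
  congr 1
  apply filter_congr
  intro M _
  simp only [P0]

lemma lamSel_eq (n b₁ b₂ : ℕ) : lamSel n b₁ b₂ = (Aset n b₁ b₂).card := by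
  classical
  have h1 : lamSel n b₁ b₂ = ((Icc 1 n ×ˢ Icc 1 n).powerset.filter fun A =>
      (∀ p ∈ A, IsOneArc n p ∨ IsTwoArc n p) ∧ ArcsDisjoint A ∧
      (A.filter fun p => p.2 = p.1 + 1).card = b₁ ∧
      (A.filter fun p => p.2 = p.1 + 2).card = b₂).card :=
    natCard_subtype _ _ (fun A h => mem_powerset.mpr (fun p hp => by
      have := (PA_sel h).arc_bounds p hp
      rw [mem_product, mem_Icc, mem_Icc]
      omega))
  rw [h1, Aset]
  congr 1
  apply filter_congr
  intro A _
  simp only [PA]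

lemma GCount₂_eq (k n ℓ j₁ j₂ : ℕ) :
    GCount₂ k n ℓ j₁ j₂ = ((Mset k n ℓ).filter fun M =>
      (M.filter fun p => p.2 = p.1 + 1).card = j₁ ∧
      (M.filter fun p => p.2 = p.1 + 2).card = j₂).card := by
  classical
  have h1 : GCount₂ k n ℓ j₁ j₂ = ((Icc 1 n ×ˢ Icc 1 n).powerset.filter fun M =>
      IsPartialMatching n M ∧ KNoncrossing k M ∧ isolatedCount n M = ℓ ∧
      (M.filter fun p => p.2 = p.1 + 1).card = j₁ ∧
      (M.filter fun p => p.2 = p.1 + 2).card = j₂).card :=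
    natCard_subtype _ _ (fun M h => mem_powerset.mpr (matching_mem_prod h.1))
  rw [h1, Mset, filter_filter]
  congr 1
  apply filter_congr
  intro M _
  simp only [P0, and_assoc]

noncomputable def TT (k n ℓ b₁ b₂ : ℕ) :
    Finset (Finset (ℕ × ℕ) × Finset (ℕ × ℕ) × Finset (ℕ × ℕ)) :=
  (Mset k n ℓ).biUnion fun M =>
    (((M.filter fun p => p.2 = p.1 + 1).powersetCard b₁) ×ˢ
      ((M.filter fun p => p.2 = p.1 + 2).powersetCard b₂)).image fun s => (M, s.1, s.2)

lemma mem_TT {k n ℓ b₁ b₂ : ℕ} {x : Finset (ℕ × ℕ) × Finset (ℕ × ℕ) × Finset (ℕ × ℕ)} :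
    x ∈ TT k n ℓ b₁ b₂ ↔ x.1 ∈ Mset k n ℓ ∧
      x.2.1 ⊆ (x.1.filter fun p => p.2 = p.1 + 1) ∧ x.2.1.card = b₁ ∧
      x.2.2 ⊆ (x.1.filter fun p => p.2 = p.1 + 2) ∧ x.2.2.card = b₂ := by
  rw [TT, mem_biUnion]
  constructor
  · rintro ⟨M, hM, hx⟩
    obtain ⟨s, hs, rfl⟩ := mem_image.mp hx
    rw [mem_product, mem_powersetCard, mem_powersetCard] at hs
    exact ⟨hM, hs.1.1, hs.1.2, hs.2.1, hs.2.2⟩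
  · rintro ⟨h1, h2, h3, h4, h5⟩
    refine ⟨x.1, h1, mem_image.mpr ⟨(x.2.1, x.2.2), ?_, by simp⟩⟩
    rw [mem_product, mem_powersetCard, mem_powersetCard]
    exact ⟨⟨h2, h3⟩, h4, h5⟩

lemma TT_card_sum (k n ℓ b₁ b₂ : ℕ) :
    (TT k n ℓ b₁ b₂).card = ∑ M ∈ Mset k n ℓ,
      ((M.filter fun p => p.2 = p.1 + 1).card.choose b₁) *
        ((M.filter fun p => p.2 = p.1 + 2).card.choose b₂) := by
  classical
  rw [TT, card_biUnion]
  · refine Finset.sum_congr rfl fun M hM => ?_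
    rw [card_image_of_injOn, card_product, card_powersetCard, card_powersetCard]
    intro s hs t ht hst
    have h1 : s.1 = t.1 := congrArg (fun y => y.2.1) hst
    have h2 : s.2 = t.2 := congrArg (fun y => y.2.2) hst
    exact Prod.ext h1 h2
  · intro M hM M' hM' hMM'
    rw [Function.onFun, disjoint_left]
    intro x hx hx'
    obtain ⟨s, _, rfl⟩ := mem_image.mp hx
    obtain ⟨t, _, ht⟩ := mem_image.mp hx'
    exact hMM' (congrArg (fun y => y.1) ht).symm

lemma sum_eq_TT (k n ℓ b₁ b₂ : ℕ) :
    ∑ j₁ ∈ Finset.Icc b₁ n, ∑ j₂ ∈ Finset.Icc b₂ n,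
        j₁.choose b₁ * j₂.choose b₂ * GCount₂ k n ℓ j₁ j₂ =
      (TT k n ℓ b₁ b₂).card := by
  classical
  have hzero : ∀ j b : ℕ, j < b → j.choose b = 0 := fun j b h => Nat.choose_eq_zero_of_lt h
  have inner : ∀ j₁ : ℕ, ∑ j₂ ∈ Finset.Icc b₂ n,
      j₁.choose b₁ * j₂.choose b₂ * GCount₂ k n ℓ j₁ j₂
      = ∑ j₂ ∈ Finset.Icc 0 n, j₁.choose b₁ * j₂.choose b₂ * GCount₂ k n ℓ j₁ j₂ := by
    intro j₁
    apply Finset.sum_subset (Finset.Icc_subset_Icc (Nat.zero_le _) le_rfl)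
    intro j₂ h2 h2'
    rw [mem_Icc] at h2 h2'
    rw [hzero j₂ b₂ (by omega), Nat.mul_zero, Nat.zero_mul]
  have e1 : ∑ j₁ ∈ Finset.Icc b₁ n, ∑ j₂ ∈ Finset.Icc b₂ n,
      j₁.choose b₁ * j₂.choose b₂ * GCount₂ k n ℓ j₁ j₂
      = ∑ j₁ ∈ Finset.Icc 0 n, ∑ j₂ ∈ Finset.Icc 0 n,
      j₁.choose b₁ * j₂.choose b₂ * GCount₂ k n ℓ j₁ j₂ := by
    rw [Finset.sum_congr rfl (fun j₁ _ => inner j₁)]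
    apply Finset.sum_subset (Finset.Icc_subset_Icc (Nat.zero_le _) le_rfl)
    intro j₁ h1 h1'
    rw [mem_Icc] at h1 h1'
    exact Finset.sum_eq_zero fun j₂ _ => by
      rw [hzero j₁ b₁ (by omega), Nat.zero_mul, Nat.zero_mul]
  rw [e1, TT_card_sum, ← Finset.sum_product']
  rw [← Finset.sum_fiberwise_of_maps_to (g := fun M : Finset (ℕ × ℕ) =>
      ((M.filter fun p => p.2 = p.1 + 1).card, (M.filter fun p => p.2 = p.1 + 2).card))
      (t := Finset.Icc 0 n ×ˢ Finset.Icc 0 n) ?_]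
  · apply Finset.sum_congr rfl
    intro y hy
    rw [Finset.sum_congr rfl (g := fun M => y.1.choose b₁ * y.2.choose b₂)
      (fun M hM => by
        rw [mem_filter] at hM
        simp [← hM.2]),
      Finset.sum_const, smul_eq_mul]
    rw [GCount₂_eq]
    rw [show ((Mset k n ℓ).filter fun M =>
        (M.filter fun p => p.2 = p.1 + 1).card = y.1 ∧
        (M.filter fun p => p.2 = p.1 + 2).card = y.2)
      = ((Mset k n ℓ).filter fun M : Finset (ℕ × ℕ) =>
        ((M.filter fun p => p.2 = p.1 + 1).card, (M.filter fun p => p.2 = p.1 + 2).card) = y)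
      from filter_congr fun M _ => by rw [Prod.ext_iff]]
    ring
  · intro M hM
    have hM' := (mem_Mset.mp hM).1
    have h2 : 2 * M.card ≤ n := matching_card_le hM'
    have l1 : (M.filter fun p => p.2 = p.1 + 1).card ≤ M.card := card_le_card (filter_subset _ _)
    have l2 : (M.filter fun p => p.2 = p.1 + 2).card ≤ M.card := card_le_card (filter_subset _ _)
    rw [mem_product, mem_Icc, mem_Icc]
    omega

lemma TT_card_bij (k n ℓ b₁ b₂ : ℕ) (hk : 3 ≤ k) :
    (TT k n ℓ b₁ b₂).card = (Aset n b₁ b₂).card * (Mset k (n - 2 * (b₁ + b₂)) ℓ).card := by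
  classical
  rw [← card_product]
  refine Finset.card_bij'
    (fun x _ => (x.2.1 ∪ x.2.2, ctr n (x.2.1 ∪ x.2.2) x.1))
    (fun y _ => (expd n y.1 y.2, (y.1.filter fun p => p.2 = p.1 + 1),
      (y.1.filter fun p => p.2 = p.1 + 2))) ?_ ?_ ?_ ?_
  · intro x hx
    obtain ⟨hM, h2, h3, h4, h5⟩ := mem_TT.mp hx
    obtain ⟨hmatch, hcross, hiso⟩ := mem_Mset.mp hM
    obtain ⟨hsel, hsub, hf1, hf2⟩ := triple_sel hmatch h2 h3 h4 h5
    have hN := ctr_matching hsel hmatch hsub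
    have hexp := expd_ctr hsel hmatch hsub
    rw [mem_product]
    constructor
    · exact mem_Aset.mpr ⟨hsel.arcs, hsel.disj, hsel.c1, hsel.c2⟩
    · apply mem_Mset.mpr
      refine ⟨hN, ?_, ?_⟩
      · intro hcr
        have := (expd_cross hk hsel hN).mpr hcr
        rw [hexp] at this
        exact hcross this
      · have := expd_iso hsel hN
        rw [hexp] at this
        rw [← this]
        exact hiso
  · intro y hy
    rw [mem_product] at hy
    have hA := mem_Aset.mp hy.1
    have hsel := PA_sel hA
    obtain ⟨hNmatch, hNcross, hNiso⟩ := mem_Mset.mp hy.2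
    have hE := expd_matching hsel hNmatch
    have hAsub : y.1 ⊆ expd n y.1 y.2 := by
      rw [expd]; exact subset_union_left
    apply mem_TT.mpr
    refine ⟨mem_Mset.mpr ⟨hE, ?_, ?_⟩, ?_, ?_, ?_, ?_⟩
    · intro hcr
      exact hNcross ((expd_cross hk hsel hNmatch).mp hcr)
    · rw [expd_iso hsel hNmatch]
      exact hNiso
    · exact filter_subset_filter _ hAsub
    · exact hsel.c1
    · exact filter_subset_filter _ hAsub
    · exact hsel.c2
  · intro x hx
    obtain ⟨hM, h2, h3, h4, h5⟩ := mem_TT.mp hx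
    obtain ⟨hmatch, hcross, hiso⟩ := mem_Mset.mp hM
    obtain ⟨hsel, hsub, hf1, hf2⟩ := triple_sel hmatch h2 h3 h4 h5
    have hexp := expd_ctr hsel hmatch hsub
    refine Prod.ext ?_ (Prod.ext ?_ ?_)
    · exact hexp
    · exact hf1
    · exact hf2
  · intro y hy
    rw [mem_product] at hy
    have hA := mem_Aset.mp hy.1
    have hsel := PA_sel hA
    obtain ⟨hNmatch, hNcross, hNiso⟩ := mem_Mset.mp hy.2
    have hA' : ((y.1.filter fun p => p.2 = p.1 + 1) ∪ (y.1.filter fun p => p.2 = p.1 + 2)) = y.1 := by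
      rw [← filter_or]
      apply filter_true_of_mem
      intro p hp
      rcases hsel.arcs p hp with h | h
      · exact Or.inl h.2.2
      · exact Or.inr h.2.2
    refine Prod.ext ?_ ?_
    · exact hA'
    · show ctr n _ (expd n y.1 y.2) = y.2
      rw [hA']
      exact ctr_expd hsel hNmatch

end S19

/-- For `k > 2` and `b₁, b₂ ≥ 0`:
`Σ_{j₁ ≥ b₁, j₂ ≥ b₂} C(j₁,b₁) C(j₂,b₂) G_k(n,ℓ,j₁,j₂)
  = λ(n,b₁,b₂) f_k(n-2(b₁+b₂), ℓ)`
(the sums are finite since `G_k(n,ℓ,j₁,j₂) = 0` for `j₁ > n` or `j₂ > n`). -/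
theorem sum_choose_GCount₂ (k n ℓ b₁ b₂ : ℕ) (hk : 2 < k) :
    ∑ j₁ ∈ Finset.Icc b₁ n, ∑ j₂ ∈ Finset.Icc b₂ n,
        j₁.choose b₁ * j₂.choose b₂ * GCount₂ k n ℓ j₁ j₂ =
      lamSel n b₁ b₂ * fMatch k (n - 2 * (b₁ + b₂)) ℓ := by
  classical
  rw [S19.sum_eq_TT, S19.TT_card_bij k n ℓ b₁ b₂ (by omega), S19.lamSel_eq, S19.fMatch_eq]
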